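/- ω ∧ ψ = 0 in the exterior algebra Λ_R(M). (This expresses that the special holomorphic cocycle ψ_{q,0} = Σ_{α₁,…,α_q} z_{α₁}⋯z_{α_q} ⊗ ξ_{α₁,1}∧⋯∧ξ_{α_q,q} is closed, ∂ψ_{q,0} = 0, and by the symmetric identity with the roles of the two families of variables exchanged that ψ_{0,q} is closed as well.) -/

import Mathlib

set_option synthInstance.maxHeartbeats 1000000
set_option maxHeartbeats 1000000


lemma aux_iota_mul_prod {R : Type*} {M : Type*} [CommRing R] [AddCommGroup M] [Module R M]
    (v : M) (l : List M) (hv : v ∈ l) :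
    ExteriorAlgebra.ι R v * (l.map (ExteriorAlgebra.ι R)).prod = 0 := by
  induction l with
  | nil => simp at hv
  | cons b t ih =>
    simp only [List.map_cons, List.prod_cons, ← mul_assoc]
    rcases List.mem_cons.mp hv with h | h
    · subst h
      rw [ExteriorAlgebra.ι_sq_zero, zero_mul]
    · have hsw : ExteriorAlgebra.ι R v * ExteriorAlgebra.ι R b
          = - (ExteriorAlgebra.ι R b * ExteriorAlgebra.ι R v) := by
        rw [eq_neg_iff_add_eq_zero]
        exact ExteriorAlgebra.ι_add_mul_swap v b
      rw [hsw, neg_mul, mul_assoc, ih h, mul_zero, neg_zero]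

/-- Let `R` be the polynomial ring over `ℂ` in the `p + q` variables
`z₁, …, z_p` (indexed by `Sum.inl`) and `w₁, …, w_q` (indexed by `Sum.inr`), and let
`M` be the free `R`-module with basis `ξ_{α,μ}`, `(α,μ) ∈ {1,…,p}×{1,…,q}`,
realized as `(Fin p × Fin q) → R` with basis the functions `Pi.single (α,μ) 1`.
In the exterior algebra `Λ_R(M)`, setting `η_μ = Σ_α z_α·ξ_{α,μ}`,
`ψ = η₁ ∧ ⋯ ∧ η_q` and `ω = Σ_{α,μ} (z_α·w_μ)·ξ_{α,μ}`, one has `ω ∧ ψ = 0`.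
(This expresses that the special holomorphic cocycle `ψ_{q,0}` is closed,
`∂ψ_{q,0} = 0`, and, by symmetry, that `ψ_{0,q}` is closed as well.) -/
theorem stmt10 (p q : ℕ) (hp : 0 < p) (hq : 0 < q)
    (η : Fin q → ExteriorAlgebra (MvPolynomial (Fin p ⊕ Fin q) ℂ)
      ((Fin p × Fin q) → MvPolynomial (Fin p ⊕ Fin q) ℂ))
    (hη : ∀ μ : Fin q, η μ = ∑ α : Fin p,
      (MvPolynomial.X (Sum.inl α) : MvPolynomial (Fin p ⊕ Fin q) ℂ) •
        ExteriorAlgebra.ι (MvPolynomial (Fin p ⊕ Fin q) ℂ)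
          (Pi.single (α, μ) 1 : (Fin p × Fin q) → MvPolynomial (Fin p ⊕ Fin q) ℂ))
    (ψ ω : ExteriorAlgebra (MvPolynomial (Fin p ⊕ Fin q) ℂ)
      ((Fin p × Fin q) → MvPolynomial (Fin p ⊕ Fin q) ℂ))
    (hψ : ψ = ((List.finRange q).map η).prod)
    (hω : ω = ∑ α : Fin p, ∑ μ : Fin q,
      ((MvPolynomial.X (Sum.inl α) * MvPolynomial.X (Sum.inr μ) :
          MvPolynomial (Fin p ⊕ Fin q) ℂ)) •
        ExteriorAlgebra.ι (MvPolynomial (Fin p ⊕ Fin q) ℂ)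
          (Pi.single (α, μ) 1 : (Fin p × Fin q) → MvPolynomial (Fin p ⊕ Fin q) ℂ)) :
    ω * ψ = 0 := by
  set R := MvPolynomial (Fin p ⊕ Fin q) ℂ
  set M := (Fin p × Fin q) → R
  set v : Fin q → M := fun μ => ∑ α : Fin p,
    (MvPolynomial.X (Sum.inl α) : R) • (Pi.single (α, μ) 1 : M) with hv
  have hηv : ∀ μ, η μ = ExteriorAlgebra.ι R (v μ) := by
    intro μ
    rw [hη μ, hv]
    simp [map_sum]
  have hωs : ω = ∑ μ : Fin q, (MvPolynomial.X (Sum.inr μ) : R) • η μ := by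
    rw [hω, Finset.sum_comm]
    refine Finset.sum_congr rfl fun μ _ => ?_
    rw [hη μ, Finset.smul_sum]
    refine Finset.sum_congr rfl fun α _ => ?_
    rw [smul_smul, mul_comm]
  rw [hωs, hψ, Finset.sum_mul]
  refine Finset.sum_eq_zero fun μ _ => ?_
  rw [smul_mul_assoc, hηv μ]
  have hmap : (List.finRange q).map η = ((List.finRange q).map v).map (ExteriorAlgebra.ι R) := by
    rw [List.map_map]; exact List.map_congr_left fun ν _ => hηv ν
  rw [hmap, aux_iota_mul_prod (v μ) _ (List.mem_map_of_mem (f := v) (List.mem_finRange μ)), smul_zero]
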